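/- arXiv:1206.5120 — 3 statements merged into one kernel-verified Lean document; each statement's English description precedes it below -/
import Mathlib

section
/- Let G be a cycle graph and L a finite set of ordered pairs of distinct vertices (OD-pairs). For a subset J ⊆ L, let A_J^+ be the set of positive arcs belonging to the positive route of every pair in J and to no positive route of a pair outside J, and define A_J^- analogously for negative arcs. Then for every J ⊆ L, A_J^+ is nonempty if and only if A_{L\J}^- is nonempty. -/
open scoped Classical
open MeasureTheory

/-- The positive (counterclockwise) route of the OD-pair `(o, d)` on the cycle with
vertex set `ZMod n` contains the positive arc at edge `v` (the arc from `v` to `v + 1`)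
iff `posRoute n o d v` holds. -/
def posRoute (n : ℕ) (o d v : ZMod n) : Prop := (v - o).val < (d - o).val

/-- The negative (clockwise) route of `(o, d)` contains the negative arc at edge `v`
(the arc from `v + 1` to `v`) iff `negRoute n o d v` holds. -/
def negRoute (n : ℕ) (o d v : ZMod n) : Prop := (v - d).val < (o - d).val

/-- An arc of the directed version of the cycle is a pair `(v, b)`: for `b = true` the
positive arc `v → v + 1`, for `b = false` the negative arc `v + 1 → v`.
`inRoute n o d b a` says that arc `a` lies on the route of direction `b` of the
OD-pair `(o, d)`. -/
def inRoute (n : ℕ) (o d : ZMod n) (b : Bool) (a : ZMod n × Bool) : Prop :=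
  a.2 = b ∧ (if b then posRoute n o d a.1 else negRoute n o d a.1)

lemma neg_iff_not_pos (n : ℕ) (hn : 1 ≤ n) (o d v : ZMod n) (hod : o ≠ d) :
    (negRoute n o d v ↔ ¬ posRoute n o d v) := by
  unfold posRoute negRoute
  haveI : NeZero n := ⟨by omega⟩
  set x := v - o with hx
  have hk : d - o ≠ 0 := sub_ne_zero.mpr hod.symm
  haveI : NeZero (d - o) := ⟨hk⟩
  have h1 : v - d = x + (-(d - o)) := by ring
  have h2 : o - d = -(d - o) := by ring
  have hneg : (-(d - o)).val = n - (d - o).val := ZMod.val_neg_of_ne_zero _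
  have ht : 0 < (d - o).val := ZMod.val_pos.mpr hk
  have htn : (d - o).val < n := ZMod.val_lt _
  have hs : x.val < n := ZMod.val_lt _
  rw [h1, h2, ZMod.val_add, hneg]
  rcases lt_or_ge x.val (d - o).val with h | h
  · rw [Nat.mod_eq_of_lt (by omega)]; omega
  · have : x.val + (n - (d - o).val) = n + (x.val - (d - o).val) := by omega
    rw [this, Nat.add_mod_left, Nat.mod_eq_of_lt (by omega)]; omega

/-- For a cycle graph with OD-pairs `L` and `J ⊆ L`, the set `A_J^+`
of positive arcs lying on the positive route of exactly the pairs in `J` is nonempty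
iff the set `A_{L\J}^-` of negative arcs lying on the negative route of exactly the
pairs in `L \ J` is nonempty. -/
theorem AJplus_nonempty_iff_Acompl_minus_nonempty (n : ℕ) (hn : 3 ≤ n)
    (L : Finset (ZMod n × ZMod n)) (hL : ∀ ℓ ∈ L, ℓ.1 ≠ ℓ.2)
    (J : Finset (ZMod n × ZMod n)) (hJ : J ⊆ L) :
    (∃ v : ZMod n, ∀ ℓ ∈ L, (posRoute n ℓ.1 ℓ.2 v ↔ ℓ ∈ J)) ↔
      (∃ v : ZMod n, ∀ ℓ ∈ L, (negRoute n ℓ.1 ℓ.2 v ↔ ℓ ∈ L \ J)) := by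
  constructor
  · rintro ⟨v, hv⟩
    refine ⟨v, fun l hl => ?_⟩
    have h := hv l hl
    rw [neg_iff_not_pos n (by omega) l.1 l.2 v (hL l hl), Finset.mem_sdiff]
    tauto
  · rintro ⟨v, hv⟩
    refine ⟨v, fun l hl => ?_⟩
    have h := hv l hl
    rw [neg_iff_not_pos n (by omega) l.1 l.2 v (hL l hl), Finset.mem_sdiff] at h
    tauto
end

section
/- Let G be a cycle graph and L a set of OD-pairs with no two pairs equal (the demand digraph is simple). For any two distinct pairs ℓ, ℓ' ∈ L, there exists J ⊆ L with |{ℓ,ℓ'} ∩ J| = 1 such that A_J = A_J^+ ∪ A_J^- is nonempty; equivalently, some arc of G lies in exactly one of the four routes associated with ℓ and ℓ'. -/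
open scoped Classical
open MeasureTheory

lemma val_sub_one' {n : ℕ} [NeZero n] {x : ZMod n} (hx : 0 < x.val) :
    (x - 1).val = x.val - 1 := by
  have h1 : (1 : ℕ) ≤ x.val := hx
  have : x - 1 = ((x.val - 1 : ℕ) : ZMod n) := by
    push_cast [Nat.cast_sub h1]
    simp [ZMod.natCast_val, ZMod.cast_id]
  rw [this, ZMod.val_cast_of_lt]
  have := ZMod.val_lt x
  omega

lemma val_neg_one' {n : ℕ} [NeZero n] (hn : 2 ≤ n) : (-1 : ZMod n).val = n - 1 := by
  have : (-1 : ZMod n) = ((n - 1 : ℕ) : ZMod n) := by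
    push_cast [Nat.cast_sub (by omega : 1 ≤ n)]
    simp
  rw [this, ZMod.val_cast_of_lt (by omega)]

lemma route_determines {n : ℕ} [NeZero n] {o d o' d' : ZMod n}
    (h : o ≠ d) (h' : o' ≠ d')
    (hall : ∀ v, posRoute n o d v ↔ posRoute n o' d' v) : o = o' ∧ d = d' := by
  have hn2 : 2 ≤ n := by
    by_contra hcon
    interval_cases n
    · exact absurd rfl (NeZero.ne 0)
    · exact h (Subsingleton.elim o d)
  have hvalpos : ∀ x : ZMod n, x ≠ 0 → 0 < x.val := by
    intro x hx
    have : x.val ≠ 0 := fun h0 => hx ((ZMod.val_eq_zero x).1 h0)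
    omega
  have hk : 0 < (d - o).val := hvalpos _ (sub_ne_zero.2 (Ne.symm h))
  have hk' : 0 < (d' - o').val := hvalpos _ (sub_ne_zero.2 (Ne.symm h'))
  have hoo' : o = o' := by
    by_contra hcon
    have hj : 0 < (o - o').val := hvalpos _ (sub_ne_zero.2 hcon)
    have h1 : posRoute n o' d' o := (hall o).1 (by simp [posRoute, hk])
    have h2 : ¬ posRoute n o d (o - 1) := by
      simp only [posRoute, sub_sub_cancel_left, val_neg_one' hn2]
      have := ZMod.val_lt (d - o)
      omega
    have h3 : ¬ posRoute n o' d' (o - 1) := fun hp => h2 ((hall _).2 hp)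
    simp only [posRoute] at h1 h3
    rw [sub_right_comm, val_sub_one' hj] at h3
    omega
  subst hoo'
  have hdd : (d - o).val = (d' - o).val := by
    by_contra hcon
    rcases Nat.lt_or_ge (d - o).val (d' - o).val with hlt | hge
    · have hv : posRoute n o d' (o + ((d - o).val : ZMod n)) := by
        simp only [posRoute, add_sub_cancel_left]
        rwa [ZMod.val_cast_of_lt (ZMod.val_lt _)]
      have := (hall _).2 hv
      simp only [posRoute, add_sub_cancel_left] at this
      rw [ZMod.val_cast_of_lt (ZMod.val_lt _)] at this
      exact lt_irrefl _ this
    · have hlt : (d' - o).val < (d - o).val := by omega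
      have hv : posRoute n o d (o + ((d' - o).val : ZMod n)) := by
        simp only [posRoute, add_sub_cancel_left]
        rwa [ZMod.val_cast_of_lt (ZMod.val_lt _)]
      have := (hall _).1 hv
      simp only [posRoute, add_sub_cancel_left] at this
      rw [ZMod.val_cast_of_lt (ZMod.val_lt _)] at this
      exact lt_irrefl _ this
  refine ⟨rfl, ?_⟩
  have h4 : d - o = d' - o := ZMod.val_injective n hdd
  exact sub_left_inj.1 h4

/-- For any two distinct OD-pairs `ℓ, ℓ'` of the simple demand digraph
on a cycle, there is a `J ⊆ L` containing exactly one of `ℓ, ℓ'` such that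
`A_J = A_J^+ ∪ A_J^-` is nonempty, i.e. some arc lies on the routes (in its own
direction) of exactly the pairs in `J`. -/
theorem exists_separating_J (n : ℕ) (hn : 3 ≤ n)
    (L : Finset (ZMod n × ZMod n)) (hL : ∀ ℓ ∈ L, ℓ.1 ≠ ℓ.2)
    (ℓ ℓ' : ZMod n × ZMod n) (hℓ : ℓ ∈ L) (hℓ' : ℓ' ∈ L) (hne : ℓ ≠ ℓ') :
    ∃ J ⊆ L, ({ℓ, ℓ'} ∩ J : Finset (ZMod n × ZMod n)).card = 1 ∧
      ∃ a : ZMod n × Bool, ∀ ℓ'' ∈ L, (inRoute n ℓ''.1 ℓ''.2 a.2 a ↔ ℓ'' ∈ J) := by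
  haveI : NeZero n := ⟨by omega⟩
  have hdiff : ¬ ∀ v, posRoute n ℓ.1 ℓ.2 v ↔ posRoute n ℓ'.1 ℓ'.2 v := by
    intro hall
    obtain ⟨h1, h2⟩ := route_determines (hL ℓ hℓ) (hL ℓ' hℓ') hall
    exact hne (Prod.ext h1 h2)
  push_neg at hdiff
  obtain ⟨v, hv⟩ := hdiff
  refine ⟨L.filter (fun p => posRoute n p.1 p.2 v), Finset.filter_subset _ _, ?_, (v, true), ?_⟩
  · rcases hv with ⟨hp, hp'⟩ | ⟨hp, hp'⟩
    · have : ({ℓ, ℓ'} ∩ L.filter (fun p => posRoute n p.1 p.2 v) : Finset _) = {ℓ} := by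
        ext p
        simp only [Finset.mem_inter, Finset.mem_insert, Finset.mem_singleton, Finset.mem_filter]
        constructor
        · rintro ⟨h1 | h1, _, h3⟩ <;> subst h1
          · rfl
          · exact absurd h3 hp'
        · rintro rfl; exact ⟨Or.inl rfl, hℓ, hp⟩
      rw [this, Finset.card_singleton]
    · have : ({ℓ, ℓ'} ∩ L.filter (fun p => posRoute n p.1 p.2 v) : Finset _) = {ℓ'} := by
        ext p
        simp only [Finset.mem_inter, Finset.mem_insert, Finset.mem_singleton, Finset.mem_filter]
        constructor
        · rintro ⟨h1 | h1, _, h3⟩ <;> subst h1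
          · exact absurd h3 hp
          · rfl
        · rintro rfl; exact ⟨Or.inr rfl, hℓ', hp'⟩
      rw [this, Finset.card_singleton]
  · intro p hp
    simp [inRoute, Finset.mem_filter, hp]
end

section
/- Let G be a cycle graph with simple demand digraph H = (T,L), nonatomic users partitioned into sets I_ℓ (ℓ ∈ L) with strictly increasing continuous user-specific cost functions on arcs. If each arc of the directed version of G is contained in at most two routes, then any two Nash equilibria induce the same flow on every arc. -/
open scoped Classical
open MeasureTheory

/-- Flow induced on arc `a` by the strategy profile `σ` (`σ i = true` means that
user `i` chooses their positive route, `σ i = false` their negative route). -/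
noncomputable def flow {I : Type} [MeasurableSpace I] (μ : Measure I) (n : ℕ)
    (od : I → ZMod n × ZMod n) (σ : I → Bool) (a : ZMod n × Bool) : ℝ :=
  (μ {i | inRoute n (od i).1 (od i).2 (σ i) a}).toReal

/-- The cost, for user `i`, of their route in direction `b`, given arc flows `f`:
the sum over the arcs of that route of the user-specific arc costs. -/
noncomputable def routeCost {I : Type} (n : ℕ) [NeZero n]
    (c : I → ZMod n × Bool → ℝ → ℝ) (f : ZMod n × Bool → ℝ)
    (od : I → ZMod n × ZMod n) (i : I) (b : Bool) : ℝ :=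
  ∑ a ∈ Finset.univ.filter (fun a : ZMod n × Bool => inRoute n (od i).1 (od i).2 b a),
    c i a (f a)

/-- `σ` is a Nash equilibrium: every user's chosen route is a minimal-cost route
given the induced flows. -/
def IsEquilibrium {I : Type} [MeasurableSpace I] (μ : Measure I) (n : ℕ) [NeZero n]
    (od : I → ZMod n × ZMod n) (c : I → ZMod n × Bool → ℝ → ℝ) (σ : I → Bool) : Prop :=
  ∀ (i : I) (b : Bool),
    routeCost n c (flow μ n od σ) od i (σ i) ≤ routeCost n c (flow μ n od σ) od i b


set_option linter.unusedSectionVars false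
set_option linter.unusedVariables false
set_option linter.unreachableTactic false
set_option linter.unusedTactic false
set_option linter.unnecessarySeqFocus false
set_option maxHeartbeats 1000000

section zmod
variable {n : ℕ} [NeZero n]

lemma zval_sub_cases (a b : ZMod n) :
    (a - b).val = if b.val ≤ a.val then a.val - b.val else a.val + n - b.val := by
  split_ifs with h
  · exact ZMod.val_sub h
  · have hba : b ≠ a := fun hc => h (le_of_eq (congrArg ZMod.val hc))
    have hne : b - a ≠ 0 := sub_ne_zero.mpr hba
    have e : a - b = -(b - a) := by ring
    rw [e, ZMod.neg_val]
    simp only [hne, if_false]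
    rw [ZMod.val_sub (le_of_not_ge h)]
    have := ZMod.val_lt b
    omega

lemma pos_self {o d : ZMod n} (h : o ≠ d) : posRoute n o d o := by
  unfold posRoute
  simp only [sub_self, ZMod.val_zero]
  exact ZMod.val_pos.mpr (sub_ne_zero.mpr (Ne.symm h))

lemma not_pos_target (o d : ZMod n) : ¬ posRoute n o d d := lt_irrefl _

/-- pos/neg partition. -/
lemma pos_iff_not_neg {o d : ZMod n} (h : o ≠ d) (v : ZMod n) :
    ¬ posRoute n o d v ↔ negRoute n o d v := by
  have key : ∀ x y : ZMod n, y ≠ 0 → (¬ x.val < y.val ↔ (x - y).val < (-y).val) := by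
    intro x y hy
    rw [zval_sub_cases, ZMod.neg_val]
    simp only [hy, if_false]
    have h1 : x.val < n := ZMod.val_lt _
    have h2 : y.val < n := ZMod.val_lt _
    have h3 : y.val ≠ 0 := fun hc => hy ((ZMod.val_eq_zero _).mp hc)
    split_ifs with hc <;> omega
  have e1 : v - d = (v - o) - (d - o) := by ring
  have e2 : o - d = -(d - o) := by ring
  unfold posRoute negRoute
  rw [e1, e2]
  exact key (v - o) (d - o) (sub_ne_zero.mpr (Ne.symm h))

lemma not_neg_iff_pos {o d : ZMod n} (h : o ≠ d) (v : ZMod n) :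
    ¬ negRoute n o d v ↔ posRoute n o d v := by
  rw [← pos_iff_not_neg h v, not_not]

/-- Injectivity of the positive route set. -/
lemma posRoute_inj (hn : 3 ≤ n) {o d o' d' : ZMod n} (h : o ≠ d) (h' : o' ≠ d')
    (heq : ∀ v, posRoute n o d v ↔ posRoute n o' d' v) : o = o' ∧ d = d' := by
  have hone : (1 : ZMod n).val = 1 := by
    rw [ZMod.val_one_eq_one_mod]; exact Nat.mod_eq_of_lt (by omega)
  have hsub1 : ∀ (a : ZMod n), a ≠ 0 → (a - 1).val = a.val - 1 := by
    intro a ha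
    rw [zval_sub_cases, hone]
    have h3 : a.val ≠ 0 := fun hc => ha ((ZMod.val_eq_zero _).mp hc)
    simp only [show 1 ≤ a.val by omega, if_true]
  have hm1 : ∀ o : ZMod n, (o - 1 - o).val = n - 1 := by
    intro o
    have e : o - 1 - o = -1 := by ring
    rw [e, ZMod.neg_val]
    have : (1 : ZMod n) ≠ 0 := fun hc => by
      have := congrArg ZMod.val hc
      rw [hone, ZMod.val_zero] at this; exact one_ne_zero this
    simp only [this, if_false, hone]
  have key : ∀ o d o' d' : ZMod n, o ≠ d → o' ≠ d' →
      (∀ v, posRoute n o d v ↔ posRoute n o' d' v) → o = o' := by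
    intro o d o' d' h h' heq
    by_contra hne
    have h1 : posRoute n o' d' o := (heq o).mp (pos_self h)
    have h2 : ¬ posRoute n o' d' (o - 1) := by
      intro hc
      rw [← heq (o-1)] at hc
      unfold posRoute at hc
      rw [hm1 o] at hc
      have := ZMod.val_lt (d - o)
      omega
    apply h2
    unfold posRoute at h1 ⊢
    have e : o - 1 - o' = (o - o') - 1 := by ring
    rw [e, hsub1 _ (sub_ne_zero.mpr hne)]
    omega
  have ho : o = o' := key o d o' d' h h' heq
  refine ⟨ho, ?_⟩
  subst ho
  have hv1 : ¬ (d - o).val < (d' - o).val := fun hc =>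
    not_pos_target o d ((heq d).mpr hc)
  have hv2 : ¬ (d' - o).val < (d - o).val := fun hc =>
    not_pos_target o d' ((heq d').mp hc)
  have hveq : (d - o).val = (d' - o).val := by omega
  have : d - o = d' - o := ZMod.val_injective _ hveq
  have := congrArg (· + o) this
  simpa using this

end zmod

section auxx
variable {V : Type}

/-- k = 1, positive. -/
lemma aux_p (Pa : V → Prop) (sa D : ℝ) (hDdef : D = sa) (hΔ : 0 ≤ D)
    (ha : 0 < sa)
    (h : V → ℝ) (hh : ∀ v, h v = if Pa v then sa else 0)
    (Ea : (∃ v, Pa v ∧ h v < 0) ∨ (∃ v, ¬ Pa v ∧ D < h v)) : False := by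
  subst hDdef
  rcases Ea with ⟨w, hPa, hw⟩ | ⟨w, hPa, hw⟩ <;>
    rw [hh w] at hw <;> simp [hPa] at hw <;> linarith

/-- k = 2, both positive. -/
lemma aux_pp (Pa Pb : V → Prop) (sa sb D : ℝ) (hDdef : D = sa + sb) (hΔ : 0 ≤ D)
    (ha : 0 < sa) (hb : 0 < sb)
    (h : V → ℝ) (hh : ∀ v, h v = (if Pa v then sa else 0) + (if Pb v then sb else 0))
    (Ea : (∃ v, Pa v ∧ h v < 0) ∨ (∃ v, ¬ Pa v ∧ D < h v)) : False := by
  subst hDdef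
  rcases Ea with ⟨w, hPa, hw⟩ | ⟨w, hPa, hw⟩ <;>
    rw [hh w] at hw <;>
    by_cases h2 : Pb w <;>
    simp [hPa, h2] at hw <;> linarith

/-- k = 2, positive-negative. -/
lemma aux_pm (Pa Pb : V → Prop) (sa sb D : ℝ) (hDdef : D = sa + sb) (hΔ : 0 ≤ D)
    (ha : 0 < sa) (hb : sb < 0)
    (h : V → ℝ) (hh : ∀ v, h v = (if Pa v then sa else 0) + (if Pb v then sb else 0))
    (Ea : (∃ v, Pa v ∧ h v < 0) ∨ (∃ v, ¬ Pa v ∧ D < h v)) : False := by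
  subst hDdef
  rcases Ea with ⟨w, hPa, hw⟩ | ⟨w, hPa, hw⟩ <;>
    rw [hh w] at hw <;>
    by_cases h2 : Pb w <;>
    simp [hPa, h2] at hw <;> linarith

end auxx

section aux3
variable {V : Type}
variable (Pa Pb Pc : V → Prop) (sa sb sc D : ℝ) (h : V → ℝ)

/-- k = 3 coverage: every vertex is in at least 1 and at most 2 of the three sets. -/
def Cov3 : Prop := ∀ v : V,
  1 ≤ ((if Pa v then 1 else 0) + (if Pb v then 1 else 0) + (if Pc v then 1 else 0) : ℕ) ∧
  ((if Pa v then 1 else 0) + (if Pb v then 1 else 0) + (if Pc v then 1 else 0) : ℕ) ≤ 2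

lemma aux_ppp (hDdef : D = sa + sb + sc) (hΔ : 0 ≤ D)
    (ha : 0 < sa) (hb : 0 < sb) (hc : 0 < sc)
    (cov : Cov3 Pa Pb Pc)
    (hh : ∀ v, h v = (if Pa v then sa else 0) + (if Pb v then sb else 0) +
      (if Pc v then sc else 0))
    (Ea : (∃ v, Pa v ∧ h v < 0) ∨ (∃ v, ¬ Pa v ∧ D < h v)) : False := by
  subst hDdef
  rcases Ea with ⟨w, hPa, hw⟩ | ⟨w, hPa, hw⟩ <;>
    have hcv := cov w <;>
    rw [hh w] at hw <;>
    by_cases h2 : Pb w <;> by_cases h3 : Pc w <;>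
    simp [hPa, h2, h3] at hw hcv <;> linarith

lemma aux_ppm (hDdef : D = sa + sb + sc) (hΔ : 0 ≤ D)
    (ha : 0 < sa) (hb : 0 < sb) (hc : sc < 0)
    (cov : Cov3 Pa Pb Pc)
    (hh : ∀ v, h v = (if Pa v then sa else 0) + (if Pb v then sb else 0) +
      (if Pc v then sc else 0))
    (Ea : (∃ v, Pa v ∧ h v < 0) ∨ (∃ v, ¬ Pa v ∧ D < h v))
    (Eb : (∃ v, Pb v ∧ h v < 0) ∨ (∃ v, ¬ Pb v ∧ D < h v))
    (Ec : (∃ v, Pc v ∧ 0 < h v) ∨ (∃ v, ¬ Pc v ∧ h v < D)) : False := by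
  subst hDdef
  have dac : sa + sc < 0 := by
    rcases Ea with ⟨w, hPa, hw⟩ | ⟨w, hPa, hw⟩ <;>
      have hcv := cov w <;>
      rw [hh w] at hw <;>
      by_cases h2 : Pb w <;> by_cases h3 : Pc w <;>
      simp [hPa, h2, h3] at hw hcv <;> linarith
  have dbc : sb + sc < 0 := by
    rcases Eb with ⟨w, hPb, hw⟩ | ⟨w, hPb, hw⟩ <;>
      have hcv := cov w <;>
      rw [hh w] at hw <;>
      by_cases h1 : Pa w <;> by_cases h3 : Pc w <;>
      simp [hPb, h1, h3] at hw hcv <;> linarith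
  rcases Ec with ⟨w, hPc, hw⟩ | ⟨w, hPc, hw⟩ <;>
    have hcv := cov w <;>
    rw [hh w] at hw <;>
    by_cases h1 : Pa w <;> by_cases h2 : Pb w <;>
    simp [hPc, h1, h2] at hw hcv <;> linarith

lemma aux_pmm (hDdef : D = sa + sb + sc) (hΔ : 0 ≤ D)
    (ha : 0 < sa) (hb : sb < 0) (hc : sc < 0)
    (cov : Cov3 Pa Pb Pc)
    (hh : ∀ v, h v = (if Pa v then sa else 0) + (if Pb v then sb else 0) +
      (if Pc v then sc else 0))
    (Ea : (∃ v, Pa v ∧ h v < 0) ∨ (∃ v, ¬ Pa v ∧ D < h v))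
    (Eb : (∃ v, Pb v ∧ 0 < h v) ∨ (∃ v, ¬ Pb v ∧ h v < D))
    (Ec : (∃ v, Pc v ∧ 0 < h v) ∨ (∃ v, ¬ Pc v ∧ h v < D)) : False := by
  subst hDdef
  have dab : 0 < sa + sb := by
    rcases Eb with ⟨w, hPb, hw⟩ | ⟨w, hPb, hw⟩ <;>
      have hcv := cov w <;>
      rw [hh w] at hw <;>
      by_cases h1 : Pa w <;> by_cases h3 : Pc w <;>
      simp [hPb, h1, h3] at hw hcv <;> linarith
  have dac : 0 < sa + sc := by
    rcases Ec with ⟨w, hPc, hw⟩ | ⟨w, hPc, hw⟩ <;>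
      have hcv := cov w <;>
      rw [hh w] at hw <;>
      by_cases h1 : Pa w <;> by_cases h2 : Pb w <;>
      simp [hPc, h1, h2] at hw hcv <;> linarith
  rcases Ea with ⟨w, hPa, hw⟩ | ⟨w, hPa, hw⟩ <;>
    have hcv := cov w <;>
    rw [hh w] at hw <;>
    by_cases h2 : Pb w <;> by_cases h3 : Pc w <;>
    simp [hPa, h2, h3] at hw hcv <;> linarith

end aux3

section aux4
variable {V : Type}
variable (Pa Pb Pc Pd : V → Prop) (sa sb sc sd D : ℝ) (h : V → ℝ)

/-- k = 4 coverage: every vertex is in exactly 2 of the four sets. -/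
def Cov4 : Prop := ∀ v : V,
  ((if Pa v then 1 else 0) + (if Pb v then 1 else 0) + (if Pc v then 1 else 0) +
    (if Pd v then 1 else 0) : ℕ) = 2

lemma aux_pppp (hDdef : D = sa + sb + sc + sd) (hΔ : 0 ≤ D)
    (ha : 0 < sa) (hb : 0 < sb) (hc : 0 < sc) (hd : 0 < sd)
    (cov : Cov4 Pa Pb Pc Pd)
    (hh : ∀ v, h v = (if Pa v then sa else 0) + (if Pb v then sb else 0) +
      (if Pc v then sc else 0) + (if Pd v then sd else 0))
    (Ea : (∃ v, Pa v ∧ h v < 0) ∨ (∃ v, ¬ Pa v ∧ D < h v)) : False := by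
  subst hDdef
  rcases Ea with ⟨w, hPa, hw⟩ | ⟨w, hPa, hw⟩ <;>
    have hcv := cov w <;>
    rw [hh w] at hw <;>
    by_cases h2 : Pb w <;> by_cases h3 : Pc w <;> by_cases h4 : Pd w <;>
    simp [hPa, h2, h3, h4] at hw hcv <;> linarith

lemma aux_pppm (hDdef : D = sa + sb + sc + sd) (hΔ : 0 ≤ D)
    (ha : 0 < sa) (hb : 0 < sb) (hc : 0 < sc) (hd : sd < 0)
    (cov : Cov4 Pa Pb Pc Pd)
    (hh : ∀ v, h v = (if Pa v then sa else 0) + (if Pb v then sb else 0) +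
      (if Pc v then sc else 0) + (if Pd v then sd else 0))
    (Ea : (∃ v, Pa v ∧ h v < 0) ∨ (∃ v, ¬ Pa v ∧ D < h v))
    (Eb : (∃ v, Pb v ∧ h v < 0) ∨ (∃ v, ¬ Pb v ∧ D < h v))
    (Ec : (∃ v, Pc v ∧ h v < 0) ∨ (∃ v, ¬ Pc v ∧ D < h v))
    (Ed : (∃ v, Pd v ∧ 0 < h v) ∨ (∃ v, ¬ Pd v ∧ h v < D)) : False := by
  subst hDdef
  have dad : sa + sd < 0 := by
    rcases Ea with ⟨w, hP, hw⟩ | ⟨w, hP, hw⟩ <;>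
      have hcv := cov w <;>
      rw [hh w] at hw <;>
      by_cases h2 : Pb w <;> by_cases h3 : Pc w <;> by_cases h4 : Pd w <;>
      simp [hP, h2, h3, h4] at hw hcv <;> linarith
  have dbd : sb + sd < 0 := by
    rcases Eb with ⟨w, hP, hw⟩ | ⟨w, hP, hw⟩ <;>
      have hcv := cov w <;>
      rw [hh w] at hw <;>
      by_cases h1 : Pa w <;> by_cases h3 : Pc w <;> by_cases h4 : Pd w <;>
      simp [hP, h1, h3, h4] at hw hcv <;> linarith
  have dcd : sc + sd < 0 := by
    rcases Ec with ⟨w, hP, hw⟩ | ⟨w, hP, hw⟩ <;>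
      have hcv := cov w <;>
      rw [hh w] at hw <;>
      by_cases h1 : Pa w <;> by_cases h2 : Pb w <;> by_cases h4 : Pd w <;>
      simp [hP, h1, h2, h4] at hw hcv <;> linarith
  rcases Ed with ⟨w, hP, hw⟩ | ⟨w, hP, hw⟩ <;>
    have hcv := cov w <;>
    rw [hh w] at hw <;>
    by_cases h1 : Pa w <;> by_cases h2 : Pb w <;> by_cases h3 : Pc w <;>
    simp [hP, h1, h2, h3] at hw hcv <;> linarith

lemma aux_ppmm (hDdef : D = sa + sb + sc + sd) (hΔ : 0 ≤ D)
    (ha : 0 < sa) (hb : 0 < sb) (hc : sc < 0) (hd : sd < 0)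
    (cov : Cov4 Pa Pb Pc Pd)
    (hh : ∀ v, h v = (if Pa v then sa else 0) + (if Pb v then sb else 0) +
      (if Pc v then sc else 0) + (if Pd v then sd else 0))
    (Ea : (∃ v, Pa v ∧ h v < 0) ∨ (∃ v, ¬ Pa v ∧ D < h v))
    (Eb : (∃ v, Pb v ∧ h v < 0) ∨ (∃ v, ¬ Pb v ∧ D < h v))
    (Ec : (∃ v, Pc v ∧ 0 < h v) ∨ (∃ v, ¬ Pc v ∧ h v < D))
    (Ed : (∃ v, Pd v ∧ 0 < h v) ∨ (∃ v, ¬ Pd v ∧ h v < D)) : False := by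
  subst hDdef
  have da : sa + sc < 0 ∨ sa + sd < 0 := by
    rcases Ea with ⟨w, hP, hw⟩ | ⟨w, hP, hw⟩ <;>
      have hcv := cov w <;>
      rw [hh w] at hw <;>
      by_cases h2 : Pb w <;> by_cases h3 : Pc w <;> by_cases h4 : Pd w <;>
      simp [hP, h2, h3, h4] at hw hcv <;>
      first | (left; linarith) | (right; linarith) | (exfalso; linarith)
  have db : sb + sc < 0 ∨ sb + sd < 0 := by
    rcases Eb with ⟨w, hP, hw⟩ | ⟨w, hP, hw⟩ <;>
      have hcv := cov w <;>
      rw [hh w] at hw <;>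
      by_cases h1 : Pa w <;> by_cases h3 : Pc w <;> by_cases h4 : Pd w <;>
      simp [hP, h1, h3, h4] at hw hcv <;>
      first | (left; linarith) | (right; linarith) | (exfalso; linarith)
  have dc : 0 < sa + sc ∨ 0 < sb + sc := by
    rcases Ec with ⟨w, hP, hw⟩ | ⟨w, hP, hw⟩ <;>
      have hcv := cov w <;>
      rw [hh w] at hw <;>
      by_cases h1 : Pa w <;> by_cases h2 : Pb w <;> by_cases h4 : Pd w <;>
      simp [hP, h1, h2, h4] at hw hcv <;>
      first | (left; linarith) | (right; linarith) | (exfalso; linarith)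
  have dd : 0 < sa + sd ∨ 0 < sb + sd := by
    rcases Ed with ⟨w, hP, hw⟩ | ⟨w, hP, hw⟩ <;>
      have hcv := cov w <;>
      rw [hh w] at hw <;>
      by_cases h1 : Pa w <;> by_cases h2 : Pb w <;> by_cases h3 : Pc w <;>
      simp [hP, h1, h2, h3] at hw hcv <;>
      first | (left; linarith) | (right; linarith) | (exfalso; linarith)
  rcases da with da | da
  · rcases dc with dc | dc
    · linarith
    · rcases db with db | db
      · linarith
      · linarith
  · rcases dd with dd | dd
    · linarith
    · rcases db with db | db
      · linarith
      · linarith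

lemma aux_pmmm (hDdef : D = sa + sb + sc + sd) (hΔ : 0 ≤ D)
    (ha : 0 < sa) (hb : sb < 0) (hc : sc < 0) (hd : sd < 0)
    (cov : Cov4 Pa Pb Pc Pd)
    (hh : ∀ v, h v = (if Pa v then sa else 0) + (if Pb v then sb else 0) +
      (if Pc v then sc else 0) + (if Pd v then sd else 0))
    (Ea : (∃ v, Pa v ∧ h v < 0) ∨ (∃ v, ¬ Pa v ∧ D < h v)) : False := by
  subst hDdef
  rcases Ea with ⟨w, hP, hw⟩ | ⟨w, hP, hw⟩ <;>
    have hcv := cov w <;>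
    rw [hh w] at hw <;>
    by_cases h2 : Pb w <;> by_cases h3 : Pc w <;> by_cases h4 : Pd w <;>
    simp [hP, h2, h3, h4] at hw hcv <;> linarith

end aux4

section dispatch
variable {V ι : Type} [Nonempty V]

lemma noflatK (K : Finset ι) (P : ι → V → Prop) (s : ι → ℝ) (h : V → ℝ) (D : ℝ)
    (hDdef : D = ∑ ℓ ∈ K, s ℓ)
    (hh : ∀ v, h v = ∑ ℓ ∈ K, if P ℓ v then s ℓ else 0)
    (hs : ∀ ℓ ∈ K, s ℓ ≠ 0)
    (hcov : ∀ v : V, (K.filter (fun ℓ => P ℓ v)).card ≤ 2 ∧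
      (K.filter (fun ℓ => ¬ P ℓ v)).card ≤ 2)
    (hΔ : 0 ≤ D)
    (hstar : 0 < D ∨ ∃ v, h v ≠ 0)
    (hD : ∀ ℓ ∈ K,
      (0 < s ℓ → (∃ v, P ℓ v ∧ h v < 0) ∨ (∃ v, ¬ P ℓ v ∧ D < h v)) ∧
      (s ℓ < 0 → (∃ v, P ℓ v ∧ 0 < h v) ∨ (∃ v, ¬ P ℓ v ∧ h v < D))) : False := by
  classical
  -- |K| ≤ 4
  have hcard : K.card ≤ 4 := by
    obtain ⟨v⟩ := ‹Nonempty V›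
    have := Finset.card_filter_add_card_filter_not (s := K)
      (p := fun ℓ => P ℓ v)
    have h1 := (hcov v).1
    have h2 := (hcov v).2
    omega
  have h04 : K.card = 0 ∨ K.card = 1 ∨ K.card = 2 ∨ K.card = 3 ∨ K.card = 4 := by omega
  rcases h04 with h0 | h1 | h2 | h3 | h4
  -- k = 0
  · rw [Finset.card_eq_zero] at h0
    subst h0
    simp only [Finset.sum_empty] at hDdef hh
    rcases hstar with hst | ⟨v, hv⟩
    · rw [hDdef] at hst; linarith
    · exact hv (hh v)
  -- k = 1
  · rw [Finset.card_eq_one] at h1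
    obtain ⟨a, rfl⟩ := h1
    have haK : a ∈ ({a} : Finset ι) := by simp
    simp only [Finset.sum_singleton] at hDdef hh
    rcases (hs a haK).lt_or_gt with hsa | hsa
    · rw [hDdef] at hΔ; linarith
    · exact aux_p (P a) (s a) D hDdef hΔ hsa h hh ((hD a haK).1 hsa)
  -- k = 2
  · rw [Finset.card_eq_two] at h2
    obtain ⟨a, b, hab, rfl⟩ := h2
    have haK : a ∈ ({a, b} : Finset ι) := by simp
    have hbK : b ∈ ({a, b} : Finset ι) := by simp
    have hsum : ∀ (f : ι → ℝ), ∑ ℓ ∈ ({a, b} : Finset ι), f ℓ = f a + f b := by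
      intro f; rw [Finset.sum_insert (by simp [hab]), Finset.sum_singleton]
    rw [hsum] at hDdef
    have hh2 : ∀ v, h v = (if P a v then s a else 0) + (if P b v then s b else 0) := by
      intro v; rw [hh v, hsum]
    rcases (hs a haK).lt_or_gt with hsa | hsa <;> rcases (hs b hbK).lt_or_gt with hsb | hsb
    · rw [hDdef] at hΔ; linarith
    · exact aux_pm (P b) (P a) (s b) (s a) D (by rw [hDdef]; ring) hΔ hsb hsa h
        (fun v => by rw [hh2 v]; ring) ((hD b hbK).1 hsb)
    · exact aux_pm (P a) (P b) (s a) (s b) D hDdef hΔ hsa hsb h hh2 ((hD a haK).1 hsa)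
    · exact aux_pp (P a) (P b) (s a) (s b) D hDdef hΔ hsa hsb h hh2 ((hD a haK).1 hsa)
  -- k = 3
  · rw [Finset.card_eq_three] at h3
    obtain ⟨a, b, c, hab, hac, hbc, rfl⟩ := h3
    have haK : a ∈ ({a, b, c} : Finset ι) := by simp
    have hbK : b ∈ ({a, b, c} : Finset ι) := by simp
    have hcK : c ∈ ({a, b, c} : Finset ι) := by simp
    have hsum : ∀ (f : ι → ℝ), ∑ ℓ ∈ ({a, b, c} : Finset ι), f ℓ = f a + f b + f c := by
      intro f
      rw [Finset.sum_insert (by simp [hab, hac]), Finset.sum_insert (by simp [hbc]),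
        Finset.sum_singleton]; ring
    have hsumN : ∀ (f : ι → ℕ), ∑ ℓ ∈ ({a, b, c} : Finset ι), f ℓ = f a + f b + f c := by
      intro f
      rw [Finset.sum_insert (by simp [hab, hac]), Finset.sum_insert (by simp [hbc]),
        Finset.sum_singleton]; ring
    rw [hsum] at hDdef
    have hh3 : ∀ v, h v = (if P a v then s a else 0) + (if P b v then s b else 0) +
        (if P c v then s c else 0) := by
      intro v; rw [hh v, hsum]
    have cov3 : Cov3 (P a) (P b) (P c) := by
      intro v
      have c1 := (hcov v).1
      have c2 := (hcov v).2
      rw [Finset.card_filter, hsumN] at c1 c2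
      by_cases h1 : P a v <;> by_cases h2 : P b v <;> by_cases h3 : P c v <;>
        simp [h1, h2, h3] at c1 c2 ⊢ <;> omega
    have covperm : ∀ (Q R S : V → Prop), (∀ v : V,
        ((if Q v then 1 else 0) + (if R v then 1 else 0) + (if S v then 1 else 0) : ℕ)
        = ((if P a v then 1 else 0) + (if P b v then 1 else 0) + (if P c v then 1 else 0) : ℕ))
        → Cov3 Q R S := by
      intro Q R S hperm v
      have := cov3 v
      rw [hperm v]
      exact this
    rcases (hs a haK).lt_or_gt with hsa | hsa <;> rcases (hs b hbK).lt_or_gt with hsb | hsb <;>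
      rcases (hs c hcK).lt_or_gt with hsc | hsc
    · rw [hDdef] at hΔ; linarith
    · -- a<0 b<0 c>0 : pmm with (c, a, b)
      exact aux_pmm (P c) (P a) (P b) (s c) (s a) (s b) D h (by rw [hDdef]; ring) hΔ
        hsc hsa hsb (covperm _ _ _ (fun v => by ring)) (fun v => by rw [hh3 v]; ring)
        ((hD c hcK).1 hsc) ((hD a haK).2 hsa) ((hD b hbK).2 hsb)
    · -- a<0 b>0 c<0 : pmm with (b, a, c)
      exact aux_pmm (P b) (P a) (P c) (s b) (s a) (s c) D h (by rw [hDdef]; ring) hΔ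
        hsb hsa hsc (covperm _ _ _ (fun v => by ring)) (fun v => by rw [hh3 v]; ring)
        ((hD b hbK).1 hsb) ((hD a haK).2 hsa) ((hD c hcK).2 hsc)
    · -- a<0 b>0 c>0 : ppm with (b, c, a)
      exact aux_ppm (P b) (P c) (P a) (s b) (s c) (s a) D h (by rw [hDdef]; ring) hΔ
        hsb hsc hsa (covperm _ _ _ (fun v => by ring)) (fun v => by rw [hh3 v]; ring)
        ((hD b hbK).1 hsb) ((hD c hcK).1 hsc) ((hD a haK).2 hsa)
    · -- a>0 b<0 c<0 : pmm (a, b, c)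
      exact aux_pmm (P a) (P b) (P c) (s a) (s b) (s c) D h hDdef hΔ
        hsa hsb hsc cov3 hh3
        ((hD a haK).1 hsa) ((hD b hbK).2 hsb) ((hD c hcK).2 hsc)
    · -- a>0 b<0 c>0 : ppm (a, c, b)
      exact aux_ppm (P a) (P c) (P b) (s a) (s c) (s b) D h (by rw [hDdef]; ring) hΔ
        hsa hsc hsb (covperm _ _ _ (fun v => by ring)) (fun v => by rw [hh3 v]; ring)
        ((hD a haK).1 hsa) ((hD c hcK).1 hsc) ((hD b hbK).2 hsb)
    · -- a>0 b>0 c<0 : ppm (a, b, c)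
      exact aux_ppm (P a) (P b) (P c) (s a) (s b) (s c) D h hDdef hΔ
        hsa hsb hsc cov3 hh3
        ((hD a haK).1 hsa) ((hD b hbK).1 hsb) ((hD c hcK).2 hsc)
    · -- all positive : ppp
      exact aux_ppp (P a) (P b) (P c) (s a) (s b) (s c) D h hDdef hΔ
        hsa hsb hsc cov3 hh3 ((hD a haK).1 hsa)
  -- k = 4
  · rw [Finset.card_eq_succ] at h4
    obtain ⟨a, t, hat, rfl, ht3⟩ := h4
    rw [Finset.card_eq_three] at ht3
    obtain ⟨b, c, d, hbc, hbd, hcd, rfl⟩ := ht3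
    have hab : a ≠ b := by intro hx; exact hat (by simp [hx])
    have hac : a ≠ c := by intro hx; exact hat (by simp [hx])
    have had : a ≠ d := by intro hx; exact hat (by simp [hx])
    have haK : a ∈ insert a ({b, c, d} : Finset ι) := by simp
    have hbK : b ∈ insert a ({b, c, d} : Finset ι) := by simp
    have hcK : c ∈ insert a ({b, c, d} : Finset ι) := by simp
    have hdK : d ∈ insert a ({b, c, d} : Finset ι) := by simp
    have hsum : ∀ (f : ι → ℝ), ∑ ℓ ∈ insert a ({b, c, d} : Finset ι), f ℓ
        = f a + f b + f c + f d := by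
      intro f
      rw [Finset.sum_insert hat, Finset.sum_insert (by simp [hbc, hbd]),
        Finset.sum_insert (by simp [hcd]), Finset.sum_singleton]; ring
    have hsumN : ∀ (f : ι → ℕ), ∑ ℓ ∈ insert a ({b, c, d} : Finset ι), f ℓ
        = f a + f b + f c + f d := by
      intro f
      rw [Finset.sum_insert hat, Finset.sum_insert (by simp [hbc, hbd]),
        Finset.sum_insert (by simp [hcd]), Finset.sum_singleton]; ring
    rw [hsum] at hDdef
    have hh4 : ∀ v, h v = (if P a v then s a else 0) + (if P b v then s b else 0) +
        (if P c v then s c else 0) + (if P d v then s d else 0) := by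
      intro v; rw [hh v, hsum]
    have cov4 : Cov4 (P a) (P b) (P c) (P d) := by
      intro v
      have c1 := (hcov v).1
      have c2 := (hcov v).2
      rw [Finset.card_filter, hsumN] at c1 c2
      by_cases h1 : P a v <;> by_cases h2 : P b v <;> by_cases h3 : P c v <;>
        by_cases h5 : P d v <;> simp [h1, h2, h3, h5] at c1 c2 ⊢ <;> omega
    have covperm : ∀ (Q R S T : V → Prop), (∀ v : V,
        ((if Q v then 1 else 0) + (if R v then 1 else 0) + (if S v then 1 else 0) +
          (if T v then 1 else 0) : ℕ)
        = ((if P a v then 1 else 0) + (if P b v then 1 else 0) + (if P c v then 1 else 0) +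
          (if P d v then 1 else 0) : ℕ)) → Cov4 Q R S T := by
      intro Q R S T hperm v
      rw [hperm v]
      exact cov4 v
    have Ea := hD a haK
    have Eb := hD b hbK
    have Ec := hD c hcK
    have Ed := hD d hdK
    rcases (hs a haK).lt_or_gt with hsa | hsa <;> rcases (hs b hbK).lt_or_gt with hsb | hsb <;>
      rcases (hs c hcK).lt_or_gt with hsc | hsc <;> rcases (hs d hdK).lt_or_gt with hsd | hsd
    · rw [hDdef] at hΔ; linarith
    · exact aux_pmmm (P d) (P a) (P b) (P c) (s d) (s a) (s b) (s c) D h (by rw [hDdef]; ring) hΔ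
        hsd hsa hsb hsc (covperm _ _ _ _ (fun v => by ring)) (fun v => by rw [hh4 v]; ring)
        (Ed.1 hsd)
    · exact aux_pmmm (P c) (P a) (P b) (P d) (s c) (s a) (s b) (s d) D h (by rw [hDdef]; ring) hΔ
        hsc hsa hsb hsd (covperm _ _ _ _ (fun v => by ring)) (fun v => by rw [hh4 v]; ring)
        (Ec.1 hsc)
    · exact aux_ppmm (P c) (P d) (P a) (P b) (s c) (s d) (s a) (s b) D h (by rw [hDdef]; ring) hΔ
        hsc hsd hsa hsb (covperm _ _ _ _ (fun v => by ring)) (fun v => by rw [hh4 v]; ring)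
        (Ec.1 hsc) (Ed.1 hsd) (Ea.2 hsa) (Eb.2 hsb)
    · exact aux_pmmm (P b) (P a) (P c) (P d) (s b) (s a) (s c) (s d) D h (by rw [hDdef]; ring) hΔ
        hsb hsa hsc hsd (covperm _ _ _ _ (fun v => by ring)) (fun v => by rw [hh4 v]; ring)
        (Eb.1 hsb)
    · exact aux_ppmm (P b) (P d) (P a) (P c) (s b) (s d) (s a) (s c) D h (by rw [hDdef]; ring) hΔ
        hsb hsd hsa hsc (covperm _ _ _ _ (fun v => by ring)) (fun v => by rw [hh4 v]; ring)
        (Eb.1 hsb) (Ed.1 hsd) (Ea.2 hsa) (Ec.2 hsc)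
    · exact aux_ppmm (P b) (P c) (P a) (P d) (s b) (s c) (s a) (s d) D h (by rw [hDdef]; ring) hΔ
        hsb hsc hsa hsd (covperm _ _ _ _ (fun v => by ring)) (fun v => by rw [hh4 v]; ring)
        (Eb.1 hsb) (Ec.1 hsc) (Ea.2 hsa) (Ed.2 hsd)
    · exact aux_pppm (P b) (P c) (P d) (P a) (s b) (s c) (s d) (s a) D h (by rw [hDdef]; ring) hΔ
        hsb hsc hsd hsa (covperm _ _ _ _ (fun v => by ring)) (fun v => by rw [hh4 v]; ring)
        (Eb.1 hsb) (Ec.1 hsc) (Ed.1 hsd) (Ea.2 hsa)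
    · exact aux_pmmm (P a) (P b) (P c) (P d) (s a) (s b) (s c) (s d) D h hDdef hΔ
        hsa hsb hsc hsd cov4 hh4 (Ea.1 hsa)
    · exact aux_ppmm (P a) (P d) (P b) (P c) (s a) (s d) (s b) (s c) D h (by rw [hDdef]; ring) hΔ
        hsa hsd hsb hsc (covperm _ _ _ _ (fun v => by ring)) (fun v => by rw [hh4 v]; ring)
        (Ea.1 hsa) (Ed.1 hsd) (Eb.2 hsb) (Ec.2 hsc)
    · exact aux_ppmm (P a) (P c) (P b) (P d) (s a) (s c) (s b) (s d) D h (by rw [hDdef]; ring) hΔ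
        hsa hsc hsb hsd (covperm _ _ _ _ (fun v => by ring)) (fun v => by rw [hh4 v]; ring)
        (Ea.1 hsa) (Ec.1 hsc) (Eb.2 hsb) (Ed.2 hsd)
    · exact aux_pppm (P a) (P c) (P d) (P b) (s a) (s c) (s d) (s b) D h (by rw [hDdef]; ring) hΔ
        hsa hsc hsd hsb (covperm _ _ _ _ (fun v => by ring)) (fun v => by rw [hh4 v]; ring)
        (Ea.1 hsa) (Ec.1 hsc) (Ed.1 hsd) (Eb.2 hsb)
    · exact aux_ppmm (P a) (P b) (P c) (P d) (s a) (s b) (s c) (s d) D h hDdef hΔ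
        hsa hsb hsc hsd cov4 hh4
        (Ea.1 hsa) (Eb.1 hsb) (Ec.2 hsc) (Ed.2 hsd)
    · exact aux_pppm (P a) (P b) (P d) (P c) (s a) (s b) (s d) (s c) D h (by rw [hDdef]; ring) hΔ
        hsa hsb hsd hsc (covperm _ _ _ _ (fun v => by ring)) (fun v => by rw [hh4 v]; ring)
        (Ea.1 hsa) (Eb.1 hsb) (Ed.1 hsd) (Ec.2 hsc)
    · exact aux_pppm (P a) (P b) (P c) (P d) (s a) (s b) (s c) (s d) D h hDdef hΔ
        hsa hsb hsc hsd cov4 hh4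
        (Ea.1 hsa) (Eb.1 hsb) (Ec.1 hsc) (Ed.2 hsd)
    · exact aux_pppp (P a) (P b) (P c) (P d) (s a) (s b) (s c) (s d) D h hDdef hΔ
        hsa hsb hsc hsd cov4 hh4 (Ea.1 hsa)

end dispatch

section combsec
variable {V ι : Type} [Nonempty V]

lemma comb (K : Finset ι) (P : ι → V → Prop) (s : ι → ℝ) (h : V → ℝ) (D : ℝ)
    (hDdef : D = ∑ ℓ ∈ K, s ℓ)
    (hh : ∀ v, h v = ∑ ℓ ∈ K, if P ℓ v then s ℓ else 0)
    (hs : ∀ ℓ ∈ K, s ℓ ≠ 0)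
    (hpr : ∀ ℓ ∈ K, ∃ v, ¬ P ℓ v)
    (hcov : ∀ v : V, (K.filter (fun ℓ => P ℓ v)).card ≤ 2 ∧
      (K.filter (fun ℓ => ¬ P ℓ v)).card ≤ 2)
    (hΔ : 0 ≤ D)
    (hE : ∀ ℓ ∈ K,
      (0 < s ℓ → (∀ v, P ℓ v → 0 ≤ h v) → (∀ v, ¬ P ℓ v → h v ≤ D) →
        (∀ v, (P ℓ v → h v = 0) ∧ (¬ P ℓ v → h v = D))) ∧
      (s ℓ < 0 → (∀ v, P ℓ v → h v ≤ 0) → (∀ v, ¬ P ℓ v → D ≤ h v) →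
        (∀ v, (P ℓ v → h v = 0) ∧ (¬ P ℓ v → h v = D)))) :
    D = 0 ∧ ∀ v, h v = 0 := by
  classical
  by_contra hcon
  push_neg at hcon
  set Flat : ι → Prop := fun ℓ => ∀ v, (P ℓ v → h v = 0) ∧ (¬ P ℓ v → h v = D) with hFlat
  have key : (∀ ℓ ∈ K, ¬ Flat ℓ) → (0 < D ∨ ∃ v, h v ≠ 0) → False := by
    intro hnf hstar
    refine noflatK K P s h D hDdef hh hs hcov hΔ hstar ?_
    intro ℓ hℓ
    constructor
    · intro hpos
      by_contra hnd
      push_neg at hnd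
      exact hnf ℓ hℓ ((hE ℓ hℓ).1 hpos hnd.1 hnd.2)
    · intro hneg
      by_contra hnd
      push_neg at hnd
      exact hnf ℓ hℓ ((hE ℓ hℓ).2 hneg hnd.1 hnd.2)
  rcases hΔ.eq_or_lt with hD0 | hDpos
  · -- D = 0
    obtain ⟨v0, hv0⟩ := hcon hD0.symm
    refine key ?_ (Or.inr ⟨v0, hv0⟩)
    intro ℓ hℓ hfl
    apply hv0
    rcases Classical.em (P ℓ v0) with hP | hP
    · exact (hfl v0).1 hP
    · rw [(hfl v0).2 hP, ← hD0]
  · -- D > 0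
    by_cases hfl : ∃ ℓ ∈ K, Flat ℓ
    · obtain ⟨ℓ0, hℓ0K, hfl0⟩ := hfl
      have h01 : ∀ v, h v = 0 ∨ h v = D := by
        intro v
        rcases Classical.em (P ℓ0 v) with hP | hP
        · exact Or.inl ((hfl0 v).1 hP)
        · exact Or.inr ((hfl0 v).2 hP)
      have hposflat : ∀ ℓ ∈ K, 0 < s ℓ → Flat ℓ := by
        intro ℓ hℓ hpos
        refine (hE ℓ hℓ).1 hpos ?_ ?_
        · intro v _
          rcases h01 v with hv | hv <;> rw [hv] <;> linarith
        · intro v _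
          rcases h01 v with hv | hv <;> rw [hv] <;> linarith
      obtain ⟨w, hw⟩ := hpr ℓ0 hℓ0K
      have hwD : h w = D := (hfl0 w).2 hw
      have hneg : ∀ ℓ ∈ K, P ℓ w → s ℓ < 0 := by
        intro ℓ hℓ hPw
        rcases (hs ℓ hℓ).lt_or_gt with hneg | hpos
        · exact hneg
        · exfalso
          have := ((hposflat ℓ hℓ hpos) w).1 hPw
          rw [this] at hwD
          exact absurd hwD.symm (ne_of_gt hDpos)
      have hle : h w ≤ 0 := by
        rw [hh w]
        apply Finset.sum_nonpos
        intro ℓ hℓ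
        rcases Classical.em (P ℓ w) with hP | hP
        · simp only [if_pos hP]
          exact le_of_lt (hneg ℓ hℓ hP)
        · simp only [if_neg hP]
          exact le_refl 0
      linarith [hwD ▸ hle]
    · push_neg at hfl
      exact key hfl (Or.inl hDpos)

end combsec

section mainproof

open MeasureTheory

variable {n : ℕ} [NeZero n]

lemma inRoute_sigma_pos {o d : ZMod n} (b : Bool) (v : ZMod n) :
    inRoute n o d b (v, true) ↔ (b = true ∧ posRoute n o d v) := by
  cases b <;> simp [inRoute]

lemma inRoute_sigma_neg {o d : ZMod n} (b : Bool) (v : ZMod n) :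
    inRoute n o d b (v, false) ↔ (b = false ∧ negRoute n o d v) := by
  cases b <;> simp [inRoute]

lemma main' (hn : 3 ≤ n)
    (L : Finset (ZMod n × ZMod n)) (hL : ∀ ℓ ∈ L, ℓ.1 ≠ ℓ.2)
    (hroutes : ∀ a : ZMod n × Bool,
      (L.filter (fun ℓ => inRoute n ℓ.1 ℓ.2 a.2 a)).card ≤ 2)
    {I : Type} [MeasurableSpace I] (μ : Measure I) [IsFiniteMeasure μ]
    (od : I → ZMod n × ZMod n) (hod : ∀ i, od i ∈ L)
    (c : I → ZMod n × Bool → ℝ → ℝ) (hmono : ∀ i a, StrictMono (c i a))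
    (σ σ' : I → Bool)
    (hm : ∀ a, MeasurableSet {i | inRoute n (od i).1 (od i).2 (σ i) a})
    (hm' : ∀ a, MeasurableSet {i | inRoute n (od i).1 (od i).2 (σ' i) a})
    (heq : IsEquilibrium μ n od c σ) (heq' : IsEquilibrium μ n od c σ')
    (hge : (μ {i | σ' i = true ∧ σ i = false}).toReal ≤
      (μ {i | σ i = true ∧ σ' i = false}).toReal) :
    ∀ a : ZMod n × Bool, flow μ n od σ a = flow μ n od σ' a := by
  classical
  set Dp : Set I := {i | σ i = true ∧ σ' i = false} with hDp
  set Dm : Set I := {i | σ' i = true ∧ σ i = false} with hDm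
  set Il : ZMod n × ZMod n → Set I := fun ℓ => {i | od i = ℓ} with hIl
  set s : ZMod n × ZMod n → ℝ :=
    fun ℓ => (μ (Dp ∩ Il ℓ)).toReal - (μ (Dm ∩ Il ℓ)).toReal with hs_def
  have hodne : ∀ i, (od i).1 ≠ (od i).2 := fun i => hL _ (hod i)
  -- measurability of {σ = true} and {σ' = true}
  have hσt : MeasurableSet {i | σ i = true} := by
    have he : {i | σ i = true} =
        ⋃ v : ZMod n, {i | inRoute n (od i).1 (od i).2 (σ i) (v, true)} := by
      ext i
      simp only [Set.mem_setOf_eq, Set.mem_iUnion]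
      constructor
      · intro hσi
        exact ⟨(od i).1, (inRoute_sigma_pos _ _).mpr ⟨hσi, pos_self (hodne i)⟩⟩
      · rintro ⟨v, hv⟩
        exact ((inRoute_sigma_pos _ _).mp hv).1
    rw [he]; exact MeasurableSet.iUnion (fun v => hm (v, true))
  have hσ't : MeasurableSet {i | σ' i = true} := by
    have he : {i | σ' i = true} =
        ⋃ v : ZMod n, {i | inRoute n (od i).1 (od i).2 (σ' i) (v, true)} := by
      ext i
      simp only [Set.mem_setOf_eq, Set.mem_iUnion]
      constructor
      · intro hσi
        exact ⟨(od i).1, (inRoute_sigma_pos _ _).mpr ⟨hσi, pos_self (hodne i)⟩⟩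
      · rintro ⟨v, hv⟩
        exact ((inRoute_sigma_pos _ _).mp hv).1
    rw [he]; exact MeasurableSet.iUnion (fun v => hm' (v, true))
  have hDpm : MeasurableSet Dp := by
    have he : Dp = {i | σ i = true} ∩ {i | σ' i = true}ᶜ := by
      ext i; simp [hDp, Bool.not_eq_true]
    rw [he]; exact hσt.inter hσ't.compl
  have hDmm : MeasurableSet Dm := by
    have he : Dm = {i | σ' i = true} ∩ {i | σ i = true}ᶜ := by
      ext i; simp [hDm, Bool.not_eq_true]
    rw [he]; exact hσ't.inter hσt.compl
  -- measurability of Dp ∩ Il ℓ and Dm ∩ Il ℓ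
  have hkeyM : ∀ (τ : I → Bool)
      (_ : ∀ a, MeasurableSet {i | inRoute n (od i).1 (od i).2 (τ i) a})
      (S : Set I), MeasurableSet S → (∀ i ∈ S, τ i = true) →
      ∀ ℓ ∈ L, MeasurableSet (S ∩ Il ℓ) := by
    intro τ hmτ S hSm hSτ ℓ hℓ
    have he : S ∩ Il ℓ = S ∩
        ((⋂ v ∈ {v : ZMod n | posRoute n ℓ.1 ℓ.2 v},
          {i | inRoute n (od i).1 (od i).2 (τ i) (v, true)}) ∩
         (⋂ v ∈ {v : ZMod n | ¬ posRoute n ℓ.1 ℓ.2 v},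
          {i | inRoute n (od i).1 (od i).2 (τ i) (v, true)}ᶜ)) := by
      ext i
      simp only [Set.mem_inter_iff, Set.mem_setOf_eq, Set.mem_iInter, Set.mem_compl_iff, hIl]
      constructor
      · rintro ⟨hiS, hiI⟩
        refine ⟨hiS, fun v hv => ?_, fun v hv => ?_⟩
        · exact (inRoute_sigma_pos _ _).mpr ⟨hSτ i hiS, by rw [hiI]; exact hv⟩
        · intro hc
          exact hv (by rw [← hiI]; exact ((inRoute_sigma_pos _ _).mp hc).2)
      · rintro ⟨hiS, h1, h2⟩
        refine ⟨hiS, ?_⟩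
        have hiff : ∀ v, posRoute n (od i).1 (od i).2 v ↔ posRoute n ℓ.1 ℓ.2 v := by
          intro v
          constructor
          · intro hp
            by_contra hnp
            exact h2 v hnp ((inRoute_sigma_pos _ _).mpr ⟨hSτ i hiS, hp⟩)
          · intro hp
            exact ((inRoute_sigma_pos _ _).mp (h1 v hp)).2
        obtain ⟨h1', h2'⟩ := posRoute_inj hn (hodne i) (hL ℓ hℓ) hiff
        exact Prod.ext h1' h2'
    rw [he]
    refine hSm.inter (MeasurableSet.inter ?_ ?_)
    · exact MeasurableSet.biInter (Set.to_countable _) (fun v _ => hmτ (v, true))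
    · exact MeasurableSet.biInter (Set.to_countable _) (fun v _ => (hmτ (v, true)).compl)
  have hMp : ∀ ℓ ∈ L, MeasurableSet (Dp ∩ Il ℓ) :=
    hkeyM σ hm Dp hDpm (fun i hi => hi.1)
  have hMm : ∀ ℓ ∈ L, MeasurableSet (Dm ∩ Il ℓ) :=
    hkeyM σ' hm' Dm hDmm (fun i hi => hi.1)
  -- decomposition of measures over the OD-pairs
  have hdecomp : ∀ (S : Set I), (∀ ℓ ∈ L, MeasurableSet (S ∩ Il ℓ)) →
      ∀ (Q : ZMod n × ZMod n → Prop),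
      μ (S ∩ {i | Q (od i)}) = ∑ ℓ ∈ L.filter (fun ℓ => Q ℓ), μ (S ∩ Il ℓ) := by
    intro S hSm Q
    have he : S ∩ {i | Q (od i)} = ⋃ ℓ ∈ L.filter (fun ℓ => Q ℓ), (S ∩ Il ℓ) := by
      ext i
      simp only [Set.mem_inter_iff, Set.mem_setOf_eq, Set.mem_iUnion, Finset.mem_filter, hIl]
      constructor
      · rintro ⟨hiS, hiQ⟩
        exact ⟨od i, ⟨⟨hod i, hiQ⟩, hiS, rfl⟩⟩
      · rintro ⟨ℓ, ⟨_, hQ⟩, hiS, hI⟩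
        exact ⟨hiS, by rw [hI]; exact hQ⟩
    rw [he]
    rw [measure_biUnion_finset ?_ (fun ℓ hℓ => hSm ℓ (Finset.mem_filter.mp hℓ).1)]
    · intro x hx y hy hxy
      simp only [Function.onFun]
      apply Set.disjoint_left.mpr
      rintro i ⟨_, hix⟩ ⟨_, hiy⟩
      exact hxy (by rw [← hix, ← hiy])
  -- the flow difference on positive arcs
  have gplus : ∀ v : ZMod n, flow μ n od σ (v, true) - flow μ n od σ' (v, true) =
      ∑ ℓ ∈ L.filter (fun ℓ => posRoute n ℓ.1 ℓ.2 v), s ℓ := by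
    intro v
    have hA : {i | inRoute n (od i).1 (od i).2 (σ i) (v, true)} \
        {i | inRoute n (od i).1 (od i).2 (σ' i) (v, true)} =
        Dp ∩ {i | posRoute n (od i).1 (od i).2 v} := by
      ext i
      simp only [Set.mem_diff, Set.mem_setOf_eq, Set.mem_inter_iff, hDp,
        inRoute_sigma_pos]
      rcases hσ : σ i <;> rcases hσ' : σ' i <;> simp [hσ, hσ']
    have hB : {i | inRoute n (od i).1 (od i).2 (σ' i) (v, true)} \
        {i | inRoute n (od i).1 (od i).2 (σ i) (v, true)} =
        Dm ∩ {i | posRoute n (od i).1 (od i).2 v} := by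
      ext i
      simp only [Set.mem_diff, Set.mem_setOf_eq, Set.mem_inter_iff, hDm,
        inRoute_sigma_pos]
      rcases hσ : σ i <;> rcases hσ' : σ' i <;> simp [hσ, hσ']
    have h1 := measure_diff_add_inter (μ := μ)
      {i | inRoute n (od i).1 (od i).2 (σ i) (v, true)} (hm' (v, true))
    have h2 := measure_diff_add_inter (μ := μ)
      {i | inRoute n (od i).1 (od i).2 (σ' i) (v, true)} (hm (v, true))
    rw [Set.inter_comm] at h2
    have e1 : flow μ n od σ (v, true) =
        (μ (Dp ∩ {i | posRoute n (od i).1 (od i).2 v})).toReal +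
        (μ ({i | inRoute n (od i).1 (od i).2 (σ i) (v, true)} ∩
          {i | inRoute n (od i).1 (od i).2 (σ' i) (v, true)})).toReal := by
      unfold flow
      rw [← h1, hA, ENNReal.toReal_add (measure_ne_top μ _) (measure_ne_top μ _)]
    have e2 : flow μ n od σ' (v, true) =
        (μ (Dm ∩ {i | posRoute n (od i).1 (od i).2 v})).toReal +
        (μ ({i | inRoute n (od i).1 (od i).2 (σ i) (v, true)} ∩
          {i | inRoute n (od i).1 (od i).2 (σ' i) (v, true)})).toReal := by
      unfold flow
      rw [← h2, hB, ENNReal.toReal_add (measure_ne_top μ _) (measure_ne_top μ _)]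
    rw [e1, e2, hdecomp Dp hMp (fun ℓ => posRoute n ℓ.1 ℓ.2 v),
      hdecomp Dm hMm (fun ℓ => posRoute n ℓ.1 ℓ.2 v),
      ENNReal.toReal_sum (fun _ _ => measure_ne_top μ _),
      ENNReal.toReal_sum (fun _ _ => measure_ne_top μ _)]
    simp only [hs_def]
    rw [Finset.sum_sub_distrib]
    ring
  -- the flow difference on negative arcs
  have gminus : ∀ v : ZMod n, flow μ n od σ (v, false) - flow μ n od σ' (v, false) =
      - ∑ ℓ ∈ L.filter (fun ℓ => negRoute n ℓ.1 ℓ.2 v), s ℓ := by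
    intro v
    have hA : {i | inRoute n (od i).1 (od i).2 (σ i) (v, false)} \
        {i | inRoute n (od i).1 (od i).2 (σ' i) (v, false)} =
        Dm ∩ {i | negRoute n (od i).1 (od i).2 v} := by
      ext i
      simp only [Set.mem_diff, Set.mem_setOf_eq, Set.mem_inter_iff, hDm,
        inRoute_sigma_neg]
      rcases hσ : σ i <;> rcases hσ' : σ' i <;> simp [hσ, hσ']
    have hB : {i | inRoute n (od i).1 (od i).2 (σ' i) (v, false)} \
        {i | inRoute n (od i).1 (od i).2 (σ i) (v, false)} =
        Dp ∩ {i | negRoute n (od i).1 (od i).2 v} := by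
      ext i
      simp only [Set.mem_diff, Set.mem_setOf_eq, Set.mem_inter_iff, hDp,
        inRoute_sigma_neg]
      rcases hσ : σ i <;> rcases hσ' : σ' i <;> simp [hσ, hσ']
    have h1 := measure_diff_add_inter (μ := μ)
      {i | inRoute n (od i).1 (od i).2 (σ i) (v, false)} (hm' (v, false))
    have h2 := measure_diff_add_inter (μ := μ)
      {i | inRoute n (od i).1 (od i).2 (σ' i) (v, false)} (hm (v, false))
    rw [Set.inter_comm] at h2
    have e1 : flow μ n od σ (v, false) =
        (μ (Dm ∩ {i | negRoute n (od i).1 (od i).2 v})).toReal +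
        (μ ({i | inRoute n (od i).1 (od i).2 (σ i) (v, false)} ∩
          {i | inRoute n (od i).1 (od i).2 (σ' i) (v, false)})).toReal := by
      unfold flow
      rw [← h1, hA, ENNReal.toReal_add (measure_ne_top μ _) (measure_ne_top μ _)]
    have e2 : flow μ n od σ' (v, false) =
        (μ (Dp ∩ {i | negRoute n (od i).1 (od i).2 v})).toReal +
        (μ ({i | inRoute n (od i).1 (od i).2 (σ i) (v, false)} ∩
          {i | inRoute n (od i).1 (od i).2 (σ' i) (v, false)})).toReal := by
      unfold flow
      rw [← h2, hB, ENNReal.toReal_add (measure_ne_top μ _) (measure_ne_top μ _)]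
    rw [e1, e2, hdecomp Dm hMm (fun ℓ => negRoute n ℓ.1 ℓ.2 v),
      hdecomp Dp hMp (fun ℓ => negRoute n ℓ.1 ℓ.2 v),
      ENNReal.toReal_sum (fun _ _ => measure_ne_top μ _),
      ENNReal.toReal_sum (fun _ _ => measure_ne_top μ _)]
    simp only [hs_def]
    rw [Finset.sum_sub_distrib]
    ring
  -- the reduced data
  set K : Finset (ZMod n × ZMod n) := L.filter (fun ℓ => s ℓ ≠ 0) with hK
  set hfun : ZMod n → ℝ :=
    fun v => ∑ ℓ ∈ K, if posRoute n ℓ.1 ℓ.2 v then s ℓ else 0 with hfun_def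
  set Dtot : ℝ := ∑ ℓ ∈ K, s ℓ with hDtot_def
  have hSeq : ∀ v : ZMod n,
      ∑ ℓ ∈ L.filter (fun ℓ => posRoute n ℓ.1 ℓ.2 v), s ℓ = hfun v := by
    intro v
    have haux : ∀ x ∈ L, (if posRoute n x.1 x.2 v then s x else 0) ≠ 0 → s x ≠ 0 := by
      intro x hx hne
      by_cases hp : posRoute n x.1 x.2 v
      · rwa [if_pos hp] at hne
      · rw [if_neg hp] at hne; exact absurd rfl hne
    calc ∑ ℓ ∈ L.filter (fun ℓ => posRoute n ℓ.1 ℓ.2 v), s ℓ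
        = ∑ ℓ ∈ L, (if posRoute n ℓ.1 ℓ.2 v then s ℓ else 0) := Finset.sum_filter _ _
      _ = ∑ ℓ ∈ L.filter (fun ℓ => s ℓ ≠ 0), (if posRoute n ℓ.1 ℓ.2 v then s ℓ else 0) :=
          (Finset.sum_filter_of_ne haux).symm
      _ = hfun v := by rw [hfun_def]
  have hDeq : Dtot = ∑ ℓ ∈ L, s ℓ := by
    rw [hDtot_def]
    exact Finset.sum_filter_of_ne (fun x _ hx => hx)
  have hpart : ∀ v : ZMod n,
      ∑ ℓ ∈ L.filter (fun ℓ => negRoute n ℓ.1 ℓ.2 v), s ℓ =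
      (∑ ℓ ∈ L, s ℓ) - ∑ ℓ ∈ L.filter (fun ℓ => posRoute n ℓ.1 ℓ.2 v), s ℓ := by
    intro v
    have hfe : L.filter (fun ℓ => negRoute n ℓ.1 ℓ.2 v) =
        L.filter (fun ℓ => ¬ posRoute n ℓ.1 ℓ.2 v) := by
      apply Finset.filter_congr
      intro ℓ hℓ
      exact (pos_iff_not_neg (hL ℓ hℓ) v).symm
    rw [hfe]
    have := Finset.sum_filter_add_sum_filter_not L (fun ℓ => posRoute n ℓ.1 ℓ.2 v) s
    linarith
  have hgp : ∀ v : ZMod n,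
      flow μ n od σ (v, true) - flow μ n od σ' (v, true) = hfun v := by
    intro v; rw [gplus v, hSeq v]
  have hgm : ∀ v : ZMod n,
      flow μ n od σ (v, false) - flow μ n od σ' (v, false) = hfun v - Dtot := by
    intro v
    rw [gminus v, hpart v, hDeq, hSeq v]
    ring
  -- 0 ≤ Dtot
  have hDtot_meas : Dtot = (μ Dp).toReal - (μ Dm).toReal := by
    have h1 := hdecomp Dp hMp (fun _ => True)
    have h2 := hdecomp Dm hMm (fun _ => True)
    simp only [Set.setOf_true, Set.inter_univ, Finset.filter_true] at h1 h2
    rw [hDeq, h1, h2, ENNReal.toReal_sum (fun _ _ => measure_ne_top μ _),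
      ENNReal.toReal_sum (fun _ _ => measure_ne_top μ _), ← Finset.sum_sub_distrib]
  have hΔ0 : 0 ≤ Dtot := by rw [hDtot_meas]; exact sub_nonneg.mpr hge
  -- the equilibrium conditions
  have hE : ∀ ℓ ∈ K,
      (0 < s ℓ → (∀ v, posRoute n ℓ.1 ℓ.2 v → 0 ≤ hfun v) →
        (∀ v, ¬ posRoute n ℓ.1 ℓ.2 v → hfun v ≤ Dtot) →
        (∀ v, (posRoute n ℓ.1 ℓ.2 v → hfun v = 0) ∧
          (¬ posRoute n ℓ.1 ℓ.2 v → hfun v = Dtot))) ∧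
      (s ℓ < 0 → (∀ v, posRoute n ℓ.1 ℓ.2 v → hfun v ≤ 0) →
        (∀ v, ¬ posRoute n ℓ.1 ℓ.2 v → Dtot ≤ hfun v) →
        (∀ v, (posRoute n ℓ.1 ℓ.2 v → hfun v = 0) ∧
          (¬ posRoute n ℓ.1 ℓ.2 v → hfun v = Dtot))) := by
    intro ℓ hℓK
    have hℓL : ℓ ∈ L := (Finset.mem_filter.mp hℓK).1
    have hℓne : ℓ.1 ≠ ℓ.2 := hL ℓ hℓL
    constructor
    · -- positive shift
      intro hpos Hp Hn
      have hne : (Dp ∩ Il ℓ).Nonempty := by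
        apply nonempty_of_measure_ne_zero (μ := μ)
        intro hc
        rw [hs_def] at hpos
        simp only [hc, ENNReal.toReal_zero, zero_sub, neg_pos] at hpos
        exact absurd hpos (not_lt.mpr ENNReal.toReal_nonneg)
      obtain ⟨i, hiD, hiI⟩ := hne
      have hσi : σ i = true := hiD.1
      have hσ'i : σ' i = false := hiD.2
      have hodi : od i = ℓ := hiI
      have hrc : ∀ (g : ZMod n × Bool → ℝ) (b : Bool), routeCost n c g od i b =
          ∑ a ∈ Finset.univ.filter (fun a => inRoute n ℓ.1 ℓ.2 b a), c i a (g a) := by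
        intro g b
        unfold routeCost
        rw [hodi]
      have e1 := heq i false
      rw [hσi, hrc, hrc] at e1
      have e2 := heq' i true
      rw [hσ'i, hrc, hrc] at e2
      set Ft := Finset.univ.filter (fun a : ZMod n × Bool => inRoute n ℓ.1 ℓ.2 true a)
        with hFt
      set Ff := Finset.univ.filter (fun a : ZMod n × Bool => inRoute n ℓ.1 ℓ.2 false a)
        with hFf
      have harc_t : ∀ a ∈ Ft, flow μ n od σ' a ≤ flow μ n od σ a := by
        intro a ha
        obtain ⟨v, b⟩ := a
        have hmem := (Finset.mem_filter.mp ha).2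
        have hb : b = true := hmem.1
        subst hb
        have hposv : posRoute n ℓ.1 ℓ.2 v := ((inRoute_sigma_pos _ _).mp hmem).2
        have h1 := hgp v
        have h2 := Hp v hposv
        linarith
      have harc_f : ∀ a ∈ Ff, flow μ n od σ a ≤ flow μ n od σ' a := by
        intro a ha
        obtain ⟨v, b⟩ := a
        have hmem := (Finset.mem_filter.mp ha).2
        have hb : b = false := hmem.1
        subst hb
        have hnegv : negRoute n ℓ.1 ℓ.2 v := ((inRoute_sigma_neg _ _).mp hmem).2
        have hnp : ¬ posRoute n ℓ.1 ℓ.2 v := (pos_iff_not_neg hℓne v).mpr hnegv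
        have h1 := hgm v
        have h2 := Hn v hnp
        linarith
      have hterm_t : ∀ a ∈ Ft,
          0 ≤ c i a (flow μ n od σ a) - c i a (flow μ n od σ' a) :=
        fun a ha => sub_nonneg.mpr ((hmono i a).monotone (harc_t a ha))
      have hterm_f : ∀ a ∈ Ff,
          c i a (flow μ n od σ a) - c i a (flow μ n od σ' a) ≤ 0 :=
        fun a ha => sub_nonpos.mpr ((hmono i a).monotone (harc_f a ha))
      have hsum_t : 0 ≤ ∑ a ∈ Ft,
          (c i a (flow μ n od σ a) - c i a (flow μ n od σ' a)) :=
        Finset.sum_nonneg hterm_t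
      have hsum_f : ∑ a ∈ Ff,
          (c i a (flow μ n od σ a) - c i a (flow μ n od σ' a)) ≤ 0 :=
        Finset.sum_nonpos hterm_f
      have hchain : ∑ a ∈ Ft, (c i a (flow μ n od σ a) - c i a (flow μ n od σ' a)) ≤
          ∑ a ∈ Ff, (c i a (flow μ n od σ a) - c i a (flow μ n od σ' a)) := by
        rw [Finset.sum_sub_distrib, Finset.sum_sub_distrib]
        linarith
      have hz_t : ∑ a ∈ Ft, (c i a (flow μ n od σ a) - c i a (flow μ n od σ' a)) = 0 :=
        le_antisymm (by linarith) hsum_t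
      have hz_f : ∑ a ∈ Ff, (c i a (flow μ n od σ a) - c i a (flow μ n od σ' a)) = 0 :=
        le_antisymm hsum_f (by linarith)
      have hzero_t : ∀ a ∈ Ft, flow μ n od σ a = flow μ n od σ' a := by
        intro a ha
        have h0 := (Finset.sum_eq_zero_iff_of_nonneg hterm_t).mp hz_t a ha
        exact (hmono i a).injective (by linarith)
      have hzero_f : ∀ a ∈ Ff, flow μ n od σ a = flow μ n od σ' a := by
        intro a ha
        have h0 := (Finset.sum_eq_zero_iff_of_nonpos hterm_f).mp hz_f a ha
        exact (hmono i a).injective (by linarith)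
      intro v
      constructor
      · intro hPv
        have hmem : (v, true) ∈ Ft := Finset.mem_filter.mpr
          ⟨Finset.mem_univ _, (inRoute_sigma_pos _ _).mpr ⟨rfl, hPv⟩⟩
        have h1 := hzero_t (v, true) hmem
        have h2 := hgp v
        linarith
      · intro hPv
        have hnegv : negRoute n ℓ.1 ℓ.2 v := (pos_iff_not_neg hℓne v).mp hPv
        have hmem : (v, false) ∈ Ff := Finset.mem_filter.mpr
          ⟨Finset.mem_univ _, (inRoute_sigma_neg _ _).mpr ⟨rfl, hnegv⟩⟩
        have h1 := hzero_f (v, false) hmem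
        have h2 := hgm v
        linarith
    · -- negative shift
      intro hneg Hp Hn
      have hne : (Dm ∩ Il ℓ).Nonempty := by
        apply nonempty_of_measure_ne_zero (μ := μ)
        intro hc
        rw [hs_def] at hneg
        simp only [hc, ENNReal.toReal_zero, sub_zero] at hneg
        exact absurd hneg (not_lt.mpr ENNReal.toReal_nonneg)
      obtain ⟨i, hiD, hiI⟩ := hne
      have hσi : σ i = false := hiD.2
      have hσ'i : σ' i = true := hiD.1
      have hodi : od i = ℓ := hiI
      have hrc : ∀ (g : ZMod n × Bool → ℝ) (b : Bool), routeCost n c g od i b =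
          ∑ a ∈ Finset.univ.filter (fun a => inRoute n ℓ.1 ℓ.2 b a), c i a (g a) := by
        intro g b
        unfold routeCost
        rw [hodi]
      have e1 := heq i true
      rw [hσi, hrc, hrc] at e1
      have e2 := heq' i false
      rw [hσ'i, hrc, hrc] at e2
      set Ft := Finset.univ.filter (fun a : ZMod n × Bool => inRoute n ℓ.1 ℓ.2 true a)
        with hFt
      set Ff := Finset.univ.filter (fun a : ZMod n × Bool => inRoute n ℓ.1 ℓ.2 false a)
        with hFf
      have harc_t : ∀ a ∈ Ft, flow μ n od σ a ≤ flow μ n od σ' a := by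
        intro a ha
        obtain ⟨v, b⟩ := a
        have hmem := (Finset.mem_filter.mp ha).2
        have hb : b = true := hmem.1
        subst hb
        have hposv : posRoute n ℓ.1 ℓ.2 v := ((inRoute_sigma_pos _ _).mp hmem).2
        have h1 := hgp v
        have h2 := Hp v hposv
        linarith
      have harc_f : ∀ a ∈ Ff, flow μ n od σ' a ≤ flow μ n od σ a := by
        intro a ha
        obtain ⟨v, b⟩ := a
        have hmem := (Finset.mem_filter.mp ha).2
        have hb : b = false := hmem.1
        subst hb
        have hnegv : negRoute n ℓ.1 ℓ.2 v := ((inRoute_sigma_neg _ _).mp hmem).2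
        have hnp : ¬ posRoute n ℓ.1 ℓ.2 v := (pos_iff_not_neg hℓne v).mpr hnegv
        have h1 := hgm v
        have h2 := Hn v hnp
        linarith
      have hterm_t : ∀ a ∈ Ft,
          c i a (flow μ n od σ a) - c i a (flow μ n od σ' a) ≤ 0 :=
        fun a ha => sub_nonpos.mpr ((hmono i a).monotone (harc_t a ha))
      have hterm_f : ∀ a ∈ Ff,
          0 ≤ c i a (flow μ n od σ a) - c i a (flow μ n od σ' a) :=
        fun a ha => sub_nonneg.mpr ((hmono i a).monotone (harc_f a ha))
      have hsum_t : ∑ a ∈ Ft,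
          (c i a (flow μ n od σ a) - c i a (flow μ n od σ' a)) ≤ 0 :=
        Finset.sum_nonpos hterm_t
      have hsum_f : 0 ≤ ∑ a ∈ Ff,
          (c i a (flow μ n od σ a) - c i a (flow μ n od σ' a)) :=
        Finset.sum_nonneg hterm_f
      have hchain : ∑ a ∈ Ff, (c i a (flow μ n od σ a) - c i a (flow μ n od σ' a)) ≤
          ∑ a ∈ Ft, (c i a (flow μ n od σ a) - c i a (flow μ n od σ' a)) := by
        rw [Finset.sum_sub_distrib, Finset.sum_sub_distrib]
        linarith
      have hz_t : ∑ a ∈ Ft, (c i a (flow μ n od σ a) - c i a (flow μ n od σ' a)) = 0 :=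
        le_antisymm hsum_t (by linarith)
      have hz_f : ∑ a ∈ Ff, (c i a (flow μ n od σ a) - c i a (flow μ n od σ' a)) = 0 :=
        le_antisymm (by linarith) hsum_f
      have hzero_t : ∀ a ∈ Ft, flow μ n od σ a = flow μ n od σ' a := by
        intro a ha
        have h0 := (Finset.sum_eq_zero_iff_of_nonpos hterm_t).mp hz_t a ha
        exact (hmono i a).injective (by linarith)
      have hzero_f : ∀ a ∈ Ff, flow μ n od σ a = flow μ n od σ' a := by
        intro a ha
        have h0 := (Finset.sum_eq_zero_iff_of_nonneg hterm_f).mp hz_f a ha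
        exact (hmono i a).injective (by linarith)
      intro v
      constructor
      · intro hPv
        have hmem : (v, true) ∈ Ft := Finset.mem_filter.mpr
          ⟨Finset.mem_univ _, (inRoute_sigma_pos _ _).mpr ⟨rfl, hPv⟩⟩
        have h1 := hzero_t (v, true) hmem
        have h2 := hgp v
        linarith
      · intro hPv
        have hnegv : negRoute n ℓ.1 ℓ.2 v := (pos_iff_not_neg hℓne v).mp hPv
        have hmem : (v, false) ∈ Ff := Finset.mem_filter.mpr
          ⟨Finset.mem_univ _, (inRoute_sigma_neg _ _).mpr ⟨rfl, hnegv⟩⟩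
        have h1 := hzero_f (v, false) hmem
        have h2 := hgm v
        linarith
  -- coverage
  have hcov : ∀ v : ZMod n,
      (K.filter (fun ℓ => posRoute n ℓ.1 ℓ.2 v)).card ≤ 2 ∧
      (K.filter (fun ℓ => ¬ posRoute n ℓ.1 ℓ.2 v)).card ≤ 2 := by
    intro v
    constructor
    · refine le_trans (Finset.card_le_card
        (Finset.filter_subset_filter _ (Finset.filter_subset _ _))) ?_
      have hfe : L.filter (fun ℓ => posRoute n ℓ.1 ℓ.2 v) =
          L.filter (fun ℓ => inRoute n ℓ.1 ℓ.2 (v, true).2 (v, true)) := by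
        apply Finset.filter_congr
        intro ℓ hℓ
        simp only [eq_iff_iff]
        rw [inRoute_sigma_pos]
        simp
      rw [hfe]
      exact hroutes (v, true)
    · refine le_trans (Finset.card_le_card
        (Finset.filter_subset_filter _ (Finset.filter_subset _ _))) ?_
      have hfe : L.filter (fun ℓ => ¬ posRoute n ℓ.1 ℓ.2 v) =
          L.filter (fun ℓ => inRoute n ℓ.1 ℓ.2 (v, false).2 (v, false)) := by
        apply Finset.filter_congr
        intro ℓ hℓ
        simp only [eq_iff_iff]
        rw [inRoute_sigma_neg]
        simp only [true_and]
        exact pos_iff_not_neg (hL ℓ hℓ) v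
      rw [hfe]
      exact hroutes (v, false)
  -- apply the combinatorial lemma
  obtain ⟨hD0, hh0⟩ := comb K (fun ℓ v => posRoute n ℓ.1 ℓ.2 v) s hfun Dtot
    hDtot_def (fun v => by rw [hfun_def])
    (fun ℓ hℓ => (Finset.mem_filter.mp hℓ).2)
    (fun ℓ _ => ⟨ℓ.2, not_pos_target _ _⟩)
    hcov hΔ0 hE
  intro a
  obtain ⟨v, b⟩ := a
  cases b
  · have h1 := hgm v
    have h2 := hh0 v
    rw [h2, hD0] at h1
    linarith
  · have h1 := hgp v
    have h2 := hh0 v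
    rw [h2] at h1
    linarith

end mainproof

/-- If each arc of the directed version of the cycle is contained in
at most two routes, then any two Nash equilibria of the associated nonatomic
congestion game induce the same flow on every arc. -/
theorem uniqueness_of_flows_of_atMostTwoRoutes (n : ℕ) [NeZero n] (hn : 3 ≤ n)
    (L : Finset (ZMod n × ZMod n)) (hL : ∀ ℓ ∈ L, ℓ.1 ≠ ℓ.2)
    (hroutes : ∀ a : ZMod n × Bool,
      (L.filter (fun ℓ => inRoute n ℓ.1 ℓ.2 a.2 a)).card ≤ 2)
    {I : Type} [MeasurableSpace I] (μ : Measure I) [IsFiniteMeasure μ]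
    (od : I → ZMod n × ZMod n) (hod : ∀ i, od i ∈ L)
    (c : I → ZMod n × Bool → ℝ → ℝ)
    (hmono : ∀ i a, StrictMono (c i a)) (hcont : ∀ i a, Continuous (c i a))
    (hnonneg : ∀ i a x, 0 ≤ c i a x)
    (σ σ' : I → Bool)
    (hm : ∀ a, MeasurableSet {i | inRoute n (od i).1 (od i).2 (σ i) a})
    (hm' : ∀ a, MeasurableSet {i | inRoute n (od i).1 (od i).2 (σ' i) a})
    (heq : IsEquilibrium μ n od c σ) (heq' : IsEquilibrium μ n od c σ') :
    ∀ a : ZMod n × Bool, flow μ n od σ a = flow μ n od σ' a := by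
  rcases le_total ((μ {i | σ' i = true ∧ σ i = false}).toReal)
    ((μ {i | σ i = true ∧ σ' i = false}).toReal) with hge | hge
  · exact main' hn L hL hroutes μ od hod c hmono σ σ' hm hm' heq heq' hge
  · intro a
    exact (main' hn L hL hroutes μ od hod c hmono σ' σ hm' hm heq' heq hge a).symm
end
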